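/- For every real number d with 1/2 ≤ d ≤ 8, 4·(2d+1)^{−1/2} − 3·exp(−(d/2)·(1+e^{−d})) < 1. -/

import Mathlib

lemma exp_neg_ge_pow (t c : ℝ) (n : ℕ) (hc : (n:ℝ) = c) (h0 : 0 ≤ t) (h1 : t ≤ c) :
    (1 - t/c)^n ≤ Real.exp (-t) := by
  rcases Nat.eq_zero_or_pos n with hn | hn
  · subst hn
    have hc0 : c = 0 := by exact_mod_cast hc.symm
    have ht : t = 0 := le_antisymm (hc0 ▸ h1) h0
    simp [ht]
  have hcpos : 0 < c := by rw [← hc]; exact_mod_cast hn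
  have h2 : Real.exp (-t) = (Real.exp (-(t/c)))^n := by
    rw [← Real.exp_nat_mul, hc]
    congr 1; field_simp
  rw [h2]
  apply pow_le_pow_left₀
  · have : t/c ≤ 1 := by rw [div_le_one hcpos]; exact h1
    linarith
  · have := Real.add_one_le_exp (-(t/c))
    linarith

lemma exp_neg_le_pow (t c : ℝ) (n : ℕ) (hc : (n:ℝ) = c) (h0 : 0 ≤ t) :
    Real.exp (-t) ≤ (c/(c+t))^n := by
  rcases Nat.eq_zero_or_pos n with hn | hn
  · subst hn
    simpa using Real.exp_le_one_iff.mpr (by linarith : -t ≤ 0)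
  have hcpos : 0 < c := by rw [← hc]; exact_mod_cast hn
  have h2 : Real.exp (-t) = (Real.exp (-(t/c)))^n := by
    rw [← Real.exp_nat_mul, hc]
    congr 1; field_simp
  rw [h2]
  apply pow_le_pow_left₀ (Real.exp_nonneg _)
  have h3 : (c+t)/c ≤ Real.exp (t/c) := by
    have h5 : t/c + 1 ≤ Real.exp (t/c) := Real.add_one_le_exp (t/c)
    have h6 : (c+t)/c = t/c + 1 := by field_simp; ring
    linarith
  have h4 : (0:ℝ) < c/(c+t) := by positivity
  rw [Real.exp_neg, inv_le_comm₀ (Real.exp_pos _) h4]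
  calc (c/(c+t))⁻¹ = (c+t)/c := by rw [inv_div]
    _ ≤ Real.exp (t/c) := h3

lemma rpow_bd (a v : ℝ) (ha : 0 ≤ a) (h : 0 < v ∧ 16 ≤ v^2*(2*a+1)) :
    4*(2*a+1)^(-(1/2):ℝ) ≤ v := by
  obtain ⟨hv, h16⟩ := h
  have hb : (0:ℝ) < 2*a+1 := by linarith
  have hrw : (2*a+1)^(-(1/2):ℝ) = (Real.sqrt (2*a+1))⁻¹ := by
    rw [Real.rpow_neg hb.le, Real.sqrt_eq_rpow]
  rw [hrw]
  have hs : 4/v ≤ Real.sqrt (2*a+1) := by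
    rw [Real.le_sqrt (by positivity) hb.le, div_pow, div_le_iff₀ (by positivity)]
    nlinarith
  have hs0 : 0 < Real.sqrt (2*a+1) := Real.sqrt_pos.mpr hb
  have h4 : 4 ≤ Real.sqrt (2*a+1) * v := (div_le_iff₀ hv).mp hs
  rw [mul_inv_le_iff₀ hs0]
  nlinarith

lemma step (a b u l v d : ℝ) (ha0 : 0 < a) (ha : a ≤ d) (hb : d ≤ b)
    (hu : Real.exp (-a) ≤ u) (hl : l ≤ Real.exp (-(b/2*(1+u))))
    (hv : 4*(2*a+1)^(-(1/2):ℝ) ≤ v) (hfin : v - 3*l < 1) :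
    4 * (2 * d + 1) ^ (-(1 / 2) : ℝ)
      - 3 * Real.exp (-(d / 2) * (1 + Real.exp (-d))) < 1 := by
  have hE : Real.exp (-d) ≤ u := (Real.exp_le_exp.mpr (by linarith)).trans hu
  have hE0 : 0 < Real.exp (-d) := Real.exp_pos _
  have hmono : 4*(2*d+1)^(-(1/2):ℝ) ≤ 4*(2*a+1)^(-(1/2):ℝ) := by
    have := Real.rpow_le_rpow_of_nonpos (by linarith : (0:ℝ) < 2*a+1)
      (by linarith : 2*a+1 ≤ 2*d+1) (by norm_num : (-(1/2):ℝ) ≤ 0)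
    linarith
  have hexp : Real.exp (-(b/2*(1+u))) ≤ Real.exp (-(d/2) * (1 + Real.exp (-d))) := by
    apply Real.exp_le_exp.mpr
    nlinarith
  linarith [Real.exp_pos (-(b/2*(1+u)))]

/-- For every real `d` with `1/2 ≤ d ≤ 8`,
`4 (2d+1)^{-1/2} - 3 exp(-(d/2)(1+e^{-d})) < 1`. -/
theorem four_rpow_sub_three_exp_lt_one (d : ℝ) (hd₁ : 1 / 2 ≤ d) (hd₂ : d ≤ 8) :
    4 * (2 * d + 1) ^ (-(1 / 2) : ℝ)
      - 3 * Real.exp (-(d / 2) * (1 + Real.exp (-d))) < 1 := by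
  rcases le_total d (61/100) with h1'|h1
  · exact step (1/2) (61/100) (60713/100000) (30597/50000) (282843/100000) d (by norm_num) hd₁ h1' ((exp_neg_le_pow (1/2) 128 128 (by norm_num) (by norm_num)).trans (by norm_num)) ((by norm_num : ((30597/50000):ℝ) ≤ (1 - ((61/100)/2*(1+(60713/100000)))/128)^128).trans (exp_neg_ge_pow ((61/100)/2*(1+(60713/100000))) 128 128 (by norm_num) (by norm_num) (by norm_num))) (rpow_bd (1/2) (282843/100000) (by norm_num) (by norm_num)) (by norm_num)
  rcases le_total d (37/50) with h2'|h2
  · exact step (61/100) (37/50) (27207/50000) (11281/20000) (268463/100000) d (by norm_num) h1 h2' ((exp_neg_le_pow (61/100) 128 128 (by norm_num) (by norm_num)).trans (by norm_num)) ((by norm_num : ((11281/20000):ℝ) ≤ (1 - ((37/50)/2*(1+(27207/50000)))/128)^128).trans (exp_neg_ge_pow ((37/50)/2*(1+(27207/50000))) 128 128 (by norm_num) (by norm_num) (by norm_num))) (rpow_bd (61/100) (268463/100000) (by norm_num) (by norm_num)) (by norm_num)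
  rcases le_total d (89/100) with h3'|h3
  · exact step (37/50) (89/100) (23907/50000) (1616/3125) (254001/100000) d (by norm_num) h2 h3' ((exp_neg_le_pow (37/50) 128 128 (by norm_num) (by norm_num)).trans (by norm_num)) ((by norm_num : ((1616/3125):ℝ) ≤ (1 - ((89/100)/2*(1+(23907/50000)))/128)^128).trans (exp_neg_ge_pow ((89/100)/2*(1+(23907/50000))) 128 128 (by norm_num) (by norm_num) (by norm_num))) (rpow_bd (37/50) (254001/100000) (by norm_num) (by norm_num)) (by norm_num)
  rcases le_total d (107/100) with h4'|h4
  · exact step (89/100) (107/100) (41193/100000) (23439/50000) (47981/20000) d (by norm_num) h3 h4' ((exp_neg_le_pow (89/100) 128 128 (by norm_num) (by norm_num)).trans (by norm_num)) ((by norm_num : ((23439/50000):ℝ) ≤ (1 - ((107/100)/2*(1+(41193/100000)))/128)^128).trans (exp_neg_ge_pow ((107/100)/2*(1+(41193/100000))) 128 128 (by norm_num) (by norm_num) (by norm_num))) (rpow_bd (89/100) (47981/20000) (by norm_num) (by norm_num)) (by norm_num)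
  rcases le_total d (32/25) with h5'|h5
  · exact step (107/100) (32/25) (17227/50000) (10543/25000) (112867/50000) d (by norm_num) h4 h5' ((exp_neg_le_pow (107/100) 128 128 (by norm_num) (by norm_num)).trans (by norm_num)) ((by norm_num : ((10543/25000):ℝ) ≤ (1 - ((32/25)/2*(1+(17227/50000)))/128)^128).trans (exp_neg_ge_pow ((32/25)/2*(1+(17227/50000))) 128 128 (by norm_num) (by norm_num) (by norm_num))) (rpow_bd (107/100) (112867/50000) (by norm_num) (by norm_num)) (by norm_num)
  rcases le_total d (153/100) with h6'|h6
  · exact step (32/25) (153/100) (13991/50000) (1497/4000) (53/25) d (by norm_num) h5 h6' ((exp_neg_le_pow (32/25) 128 128 (by norm_num) (by norm_num)).trans (by norm_num)) ((by norm_num : ((1497/4000):ℝ) ≤ (1 - ((153/100)/2*(1+(13991/50000)))/128)^128).trans (exp_neg_ge_pow ((153/100)/2*(1+(13991/50000))) 128 128 (by norm_num) (by norm_num) (by norm_num))) (rpow_bd (32/25) (53/25) (by norm_num) (by norm_num)) (by norm_num)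
  rcases le_total d (181/100) with h7'|h7
  · exact step (153/100) (181/100) (21851/100000) (33037/100000) (198517/100000) d (by norm_num) h6 h7' ((exp_neg_le_pow (153/100) 128 128 (by norm_num) (by norm_num)).trans (by norm_num)) ((by norm_num : ((33037/100000):ℝ) ≤ (1 - ((181/100)/2*(1+(21851/100000)))/128)^128).trans (exp_neg_ge_pow ((181/100)/2*(1+(21851/100000))) 128 128 (by norm_num) (by norm_num) (by norm_num))) (rpow_bd (153/100) (198517/100000) (by norm_num) (by norm_num)) (by norm_num)
  rcases le_total d (213/100) with h8'|h8
  · exact step (181/100) (213/100) (663/4000) (28719/100000) (186097/100000) d (by norm_num) h7 h8' ((exp_neg_le_pow (181/100) 128 128 (by norm_num) (by norm_num)).trans (by norm_num)) ((by norm_num : ((28719/100000):ℝ) ≤ (1 - ((213/100)/2*(1+(663/4000)))/128)^128).trans (exp_neg_ge_pow ((213/100)/2*(1+(663/4000))) 128 128 (by norm_num) (by norm_num) (by norm_num))) (rpow_bd (181/100) (186097/100000) (by norm_num) (by norm_num)) (by norm_num)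
  rcases le_total d (247/100) with h9'|h9
  · exact step (213/100) (247/100) (6047/50000) (1243/5000) (174409/100000) d (by norm_num) h8 h9' ((exp_neg_le_pow (213/100) 128 128 (by norm_num) (by norm_num)).trans (by norm_num)) ((by norm_num : ((1243/5000):ℝ) ≤ (1 - ((247/100)/2*(1+(6047/50000)))/128)^128).trans (exp_neg_ge_pow ((247/100)/2*(1+(6047/50000))) 128 128 (by norm_num) (by norm_num) (by norm_num))) (rpow_bd (213/100) (174409/100000) (by norm_num) (by norm_num)) (by norm_num)
  rcases le_total d (141/50) with h10'|h10
  · exact step (247/100) (141/50) (433/5000) (21409/100000) (82061/50000) d (by norm_num) h9 h10' ((exp_neg_le_pow (247/100) 128 128 (by norm_num) (by norm_num)).trans (by norm_num)) ((by norm_num : ((21409/100000):ℝ) ≤ (1 - ((141/50)/2*(1+(433/5000)))/128)^128).trans (exp_neg_ge_pow ((141/50)/2*(1+(433/5000))) 128 128 (by norm_num) (by norm_num) (by norm_num))) (rpow_bd (247/100) (82061/50000) (by norm_num) (by norm_num)) (by norm_num)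
  rcases le_total d (79/25) with h11'|h11
  · exact step (141/50) (79/25) (3073/50000) (3697/20000) (155231/100000) d (by norm_num) h10 h11' ((exp_neg_le_pow (141/50) 128 128 (by norm_num) (by norm_num)).trans (by norm_num)) ((by norm_num : ((3697/20000):ℝ) ≤ (1 - ((79/25)/2*(1+(3073/50000)))/128)^128).trans (exp_neg_ge_pow ((79/25)/2*(1+(3073/50000))) 128 128 (by norm_num) (by norm_num) (by norm_num))) (rpow_bd (141/50) (155231/100000) (by norm_num) (by norm_num)) (by norm_num)
  rcases le_total d (349/100) with h12'|h12
  · exact step (79/25) (349/100) (4409/100000) (399/2500) (29569/20000) d (by norm_num) h11 h12' ((exp_neg_le_pow (79/25) 128 128 (by norm_num) (by norm_num)).trans (by norm_num)) ((by norm_num : ((399/2500):ℝ) ≤ (1 - ((349/100)/2*(1+(4409/100000)))/128)^128).trans (exp_neg_ge_pow ((349/100)/2*(1+(4409/100000))) 128 128 (by norm_num) (by norm_num) (by norm_num))) (rpow_bd (79/25) (29569/20000) (by norm_num) (by norm_num)) (by norm_num)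
  rcases le_total d (379/100) with h13'|h13
  · exact step (349/100) (379/100) (3197/100000) (871/6250) (141599/100000) d (by norm_num) h12 h13' ((exp_neg_le_pow (349/100) 128 128 (by norm_num) (by norm_num)).trans (by norm_num)) ((by norm_num : ((871/6250):ℝ) ≤ (1 - ((379/100)/2*(1+(3197/100000)))/128)^128).trans (exp_neg_ge_pow ((379/100)/2*(1+(3197/100000))) 128 128 (by norm_num) (by norm_num) (by norm_num))) (rpow_bd (349/100) (141599/100000) (by norm_num) (by norm_num)) (by norm_num)
  rcases le_total d (407/100) with h14'|h14
  · exact step (379/100) (407/100) (597/25000) (3059/25000) (68279/50000) d (by norm_num) h13 h14' ((exp_neg_le_pow (379/100) 128 128 (by norm_num) (by norm_num)).trans (by norm_num)) ((by norm_num : ((3059/25000):ℝ) ≤ (1 - ((407/100)/2*(1+(597/25000)))/128)^128).trans (exp_neg_ge_pow ((407/100)/2*(1+(597/25000))) 128 128 (by norm_num) (by norm_num) (by norm_num))) (rpow_bd (379/100) (68279/50000) (by norm_num) (by norm_num)) (by norm_num)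
  rcases le_total d (433/100) with h15'|h15
  · exact step (407/100) (433/100) (91/5000) (10821/100000) (132309/100000) d (by norm_num) h14 h15' ((exp_neg_le_pow (407/100) 128 128 (by norm_num) (by norm_num)).trans (by norm_num)) ((by norm_num : ((10821/100000):ℝ) ≤ (1 - ((433/100)/2*(1+(91/5000)))/128)^128).trans (exp_neg_ge_pow ((433/100)/2*(1+(91/5000))) 128 128 (by norm_num) (by norm_num) (by norm_num))) (rpow_bd (407/100) (132309/100000) (by norm_num) (by norm_num)) (by norm_num)
  rcases le_total d (229/50) with h16'|h16
  · exact step (433/100) (229/50) (283/20000) (2399/25000) (64349/50000) d (by norm_num) h15 h16' ((exp_neg_le_pow (433/100) 128 128 (by norm_num) (by norm_num)).trans (by norm_num)) ((by norm_num : ((2399/25000):ℝ) ≤ (1 - ((229/50)/2*(1+(283/20000)))/128)^128).trans (exp_neg_ge_pow ((229/50)/2*(1+(283/20000))) 128 128 (by norm_num) (by norm_num) (by norm_num))) (rpow_bd (433/100) (64349/50000) (by norm_num) (by norm_num)) (by norm_num)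
  rcases le_total d (241/50) with h17'|h17
  · exact step (229/50) (241/50) (1111/100000) (8541/100000) (31373/25000) d (by norm_num) h16 h17' ((exp_neg_le_pow (229/50) 128 128 (by norm_num) (by norm_num)).trans (by norm_num)) ((by norm_num : ((8541/100000):ℝ) ≤ (1 - ((241/50)/2*(1+(1111/100000)))/128)^128).trans (exp_neg_ge_pow ((241/50)/2*(1+(1111/100000))) 128 128 (by norm_num) (by norm_num) (by norm_num))) (rpow_bd (229/50) (31373/25000) (by norm_num) (by norm_num)) (by norm_num)
  rcases le_total d (507/100) with h18'|h18
  · exact step (241/50) (507/100) (441/50000) (236/3125) (30657/25000) d (by norm_num) h17 h18' ((exp_neg_le_pow (241/50) 128 128 (by norm_num) (by norm_num)).trans (by norm_num)) ((by norm_num : ((236/3125):ℝ) ≤ (1 - ((507/100)/2*(1+(441/50000)))/128)^128).trans (exp_neg_ge_pow ((507/100)/2*(1+(441/50000))) 128 128 (by norm_num) (by norm_num) (by norm_num))) (rpow_bd (241/50) (30657/25000) (by norm_num) (by norm_num)) (by norm_num)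
  rcases le_total d (533/100) with h19'|h19
  · exact step (507/100) (533/100) (693/100000) (83/1250) (23969/20000) d (by norm_num) h18 h19' ((exp_neg_le_pow (507/100) 128 128 (by norm_num) (by norm_num)).trans (by norm_num)) ((by norm_num : ((83/1250):ℝ) ≤ (1 - ((533/100)/2*(1+(693/100000)))/128)^128).trans (exp_neg_ge_pow ((533/100)/2*(1+(693/100000))) 128 128 (by norm_num) (by norm_num) (by norm_num))) (rpow_bd (507/100) (23969/20000) (by norm_num) (by norm_num)) (by norm_num)
  rcases le_total d (563/100) with h20'|h20
  · exact step (533/100) (563/100) (27/5000) (1143/20000) (58571/50000) d (by norm_num) h19 h20' ((exp_neg_le_pow (533/100) 128 128 (by norm_num) (by norm_num)).trans (by norm_num)) ((by norm_num : ((1143/20000):ℝ) ≤ (1 - ((563/100)/2*(1+(27/5000)))/128)^128).trans (exp_neg_ge_pow ((563/100)/2*(1+(27/5000))) 128 128 (by norm_num) (by norm_num) (by norm_num))) (rpow_bd (533/100) (58571/50000) (by norm_num) (by norm_num)) (by norm_num)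
  rcases le_total d (599/100) with h21'|h21
  · exact step (563/100) (599/100) (81/20000) (4769/100000) (714/625) d (by norm_num) h20 h21' ((exp_neg_le_pow (563/100) 128 128 (by norm_num) (by norm_num)).trans (by norm_num)) ((by norm_num : ((4769/100000):ℝ) ≤ (1 - ((599/100)/2*(1+(81/20000)))/128)^128).trans (exp_neg_ge_pow ((599/100)/2*(1+(81/20000))) 128 128 (by norm_num) (by norm_num) (by norm_num))) (rpow_bd (563/100) (714/625) (by norm_num) (by norm_num)) (by norm_num)
  rcases le_total d (13/2) with h22'|h22
  · exact step (599/100) (13/2) (287/100000) (1841/50000) (55513/50000) d (by norm_num) h21 h22' ((exp_neg_le_pow (599/100) 128 128 (by norm_num) (by norm_num)).trans (by norm_num)) ((by norm_num : ((1841/50000):ℝ) ≤ (1 - ((13/2)/2*(1+(287/100000)))/128)^128).trans (exp_neg_ge_pow ((13/2)/2*(1+(287/100000))) 128 128 (by norm_num) (by norm_num) (by norm_num))) (rpow_bd (599/100) (55513/50000) (by norm_num) (by norm_num)) (by norm_num)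
  rcases le_total d (741/100) with h23'|h23
  · exact step (13/2) (741/100) (177/100000) (2313/100000) (21381/20000) d (by norm_num) h22 h23' ((exp_neg_le_pow (13/2) 128 128 (by norm_num) (by norm_num)).trans (by norm_num)) ((by norm_num : ((2313/100000):ℝ) ≤ (1 - ((741/100)/2*(1+(177/100000)))/128)^128).trans (exp_neg_ge_pow ((741/100)/2*(1+(177/100000))) 128 128 (by norm_num) (by norm_num) (by norm_num))) (rpow_bd (13/2) (21381/20000) (by norm_num) (by norm_num)) (by norm_num)
  exact step (741/100) 8 (3/4000) (107/6250) (12571/12500) d (by norm_num) h23 hd₂ ((exp_neg_le_pow (741/100) 128 128 (by norm_num) (by norm_num)).trans (by norm_num)) ((by norm_num : ((107/6250):ℝ) ≤ (1 - (8/2*(1+(3/4000)))/128)^128).trans (exp_neg_ge_pow (8/2*(1+(3/4000))) 128 128 (by norm_num) (by norm_num) (by norm_num))) (rpow_bd (741/100) (12571/12500) (by norm_num) (by norm_num)) (by norm_num)
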